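/- Under the setting of the plug-in classifier h_θ̂ with posterior marginals φ_{θ,i|n}, for all γ ∈ (0, 1/2): R(θ, h_θ̂) ≤ (inf_h R(θ,h))/(1/2 − γ) + (1/n)∑_{i=1}^n P_θ(‖φ_{θ,i|n} − φ_{θ̂,i|n}‖_TV > γ). -/

import Mathlib

open MeasureTheory ProbabilityTheory Finset

/-- Pointwise arithmetic core of the plug-in risk bound: if the true posterior
`φv` and plug-in posterior `ψv` are within total variation `γ` and `a`
maximizes `ψv`, then `1 - φv a ≤ (1 - φv b) / (1/2 - γ)` for any `b`. -/
lemma plugin_pointwise_bound {𝕏 : Type*} [Fintype 𝕏] [DecidableEq 𝕏]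
    (φv ψv : 𝕏 → ℝ) (a b : 𝕏) (γ : ℝ) (hγ0 : 0 < γ) (hγ : γ < 1/2)
    (hφ0 : ∀ x, 0 ≤ φv x) (hφsum : ∑ x, φv x = 1)
    (hmax : ∀ x, ψv x ≤ ψv a)
    (hT : (1/2 : ℝ) * ∑ x, |φv x - ψv x| ≤ γ) :
    1 - φv a ≤ (1 - φv b) / (1/2 - γ) := by
  have hc : (0:ℝ) < 1/2 - γ := by linarith
  have hφle : ∀ x, φv x ≤ 1 := by
    intro x
    have h := Finset.single_le_sum (f := φv) (fun y _ => hφ0 y) (Finset.mem_univ x)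
    rw [hφsum] at h; exact h
  by_cases hb : φv b ≤ 1/2 + γ
  · rw [le_div_iff₀ hc]
    nlinarith [hφ0 a, hφle a]
  · push_neg at hb
    have hab : a = b := by
      by_contra hne
      have hsub : |φv a - ψv a| + |φv b - ψv b| ≤ 2*γ := by
        have h1 : ∑ x ∈ ({a, b} : Finset 𝕏), |φv x - ψv x| ≤ ∑ x, |φv x - ψv x| :=
          Finset.sum_le_sum_of_subset_of_nonneg (Finset.subset_univ _)
            (fun x _ _ => abs_nonneg _)
        rw [Finset.sum_pair hne] at h1
        linarith
      have hsum2 : φv a + φv b ≤ 1 := by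
        have h1 : ∑ x ∈ ({a, b} : Finset 𝕏), φv x ≤ ∑ x, φv x :=
          Finset.sum_le_sum_of_subset_of_nonneg (Finset.subset_univ _) (fun x _ _ => hφ0 x)
        rw [Finset.sum_pair hne] at h1
        rw [hφsum] at h1; exact h1
      have h2 := hmax b
      have h3 : ψv a - φv a ≤ |φv a - ψv a| := by
        rw [abs_sub_comm]; exact le_abs_self _
      have h4 : φv b - ψv b ≤ |φv b - ψv b| := le_abs_self _
      linarith
    rw [hab]
    exact le_div_self (by linarith [hφle b]) hc (by linarith)

/-- Rewriting `(if g ω = x then 1 else 0) * f ω` as an indicator. -/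
lemma plugin_ite_mul_eq_indicator {Ω 𝕏 : Type*} [DecidableEq 𝕏] (g : Ω → 𝕏) (x : 𝕏)
    (f : Ω → ℝ) (ω : Ω) :
    (if g ω = x then (1:ℝ) else 0) * f ω = (g ⁻¹' {x}).indicator f ω := by
  by_cases h : g ω = x <;> simp [Set.indicator_apply, h]

/-- Conditional risk identity: the misclassification probability of an
`m'`-measurable classifier equals the expectation of one minus the posterior at
the predicted label. -/
lemma plugin_risk_eq {Ω 𝕏 : Type*} {m' mΩ : MeasurableSpace Ω}
    [Fintype 𝕏] [DecidableEq 𝕏] [MeasurableSpace 𝕏] [DiscreteMeasurableSpace 𝕏]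
    (hm' : m' ≤ mΩ) (μ : Measure Ω) [IsProbabilityMeasure μ]
    (X : Ω → 𝕏) (hX : Measurable X) (g : Ω → 𝕏) (hg : Measurable[m'] g) :
    ∫ ω, (if X ω ≠ g ω then (1:ℝ) else 0) ∂μ
      = ∫ ω, (1 - ∑ x, (if g ω = x then (1:ℝ) else 0) * (μ⟦X ⁻¹' {x} | m'⟧) ω) ∂μ := by
  have hs : ∀ x : 𝕏, MeasurableSet[m'] (g ⁻¹' {x}) := fun x => hg (measurableSet_singleton x)
  have hind : ∀ x : 𝕏, Integrable ((X ⁻¹' {x}).indicator (fun _ => (1:ℝ))) μ :=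
    fun x => (integrable_const 1).indicator (hX (measurableSet_singleton x))
  have I1 : ∀ x : 𝕏,
      Integrable ((g ⁻¹' {x}).indicator ((X ⁻¹' {x}).indicator (fun _ => (1:ℝ)))) μ :=
    fun x => (hind x).indicator (hm' _ (hs x))
  have I2 : ∀ x : 𝕏, Integrable ((g ⁻¹' {x}).indicator (μ⟦X ⁻¹' {x} | m'⟧)) μ :=
    fun x => integrable_condExp.indicator (hm' _ (hs x))
  have key : ∀ ω, (if X ω ≠ g ω then (1:ℝ) else 0)
      = 1 - ∑ x, (if g ω = x then (1:ℝ) else 0)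
          * (X ⁻¹' {x}).indicator (fun _ => (1:ℝ)) ω := by
    intro ω
    have h1 : ∑ x, (if g ω = x then (1:ℝ) else 0)
        * (X ⁻¹' {x}).indicator (fun _ => (1:ℝ)) ω
        = if X ω = g ω then 1 else 0 := by
      rw [Finset.sum_eq_single (g ω)]
      · by_cases h : X ω = g ω <;> simp [Set.indicator_apply, h]
      · intro x _ hx; simp [Ne.symm hx]
      · simp
    rw [h1]
    by_cases h : X ω = g ω <;> simp [h]
  calc ∫ ω, (if X ω ≠ g ω then (1:ℝ) else 0) ∂μ
      = ∫ ω, (1 - ∑ x, (if g ω = x then (1:ℝ) else 0)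
          * (X ⁻¹' {x}).indicator (fun _ => (1:ℝ)) ω) ∂μ := by
        exact integral_congr_ae (Filter.Eventually.of_forall key)
    _ = 1 - ∑ x, ∫ ω, (g ⁻¹' {x}).indicator ((X ⁻¹' {x}).indicator (fun _ => (1:ℝ))) ω ∂μ := by
        simp_rw [plugin_ite_mul_eq_indicator g _ _ _]
        rw [integral_sub (integrable_const 1) (integrable_finset_sum _ (fun x _ => I1 x)),
          integral_finset_sum _ (fun x _ => I1 x)]
        simp
    _ = 1 - ∑ x, ∫ ω, (g ⁻¹' {x}).indicator (μ⟦X ⁻¹' {x} | m'⟧) ω ∂μ := by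
        congr 1
        refine Finset.sum_congr rfl (fun x _ => ?_)
        rw [integral_indicator (hm' _ (hs x)), integral_indicator (hm' _ (hs x)),
          setIntegral_condExp hm' (hind x) (hs x)]
    _ = ∫ ω, (1 - ∑ x, (if g ω = x then (1:ℝ) else 0) * (μ⟦X ⁻¹' {x} | m'⟧) ω) ∂μ := by
        simp_rw [plugin_ite_mul_eq_indicator g _ _ _]
        rw [integral_sub (integrable_const 1) (integrable_finset_sum _ (fun x _ => I2 x)),
          integral_finset_sum _ (fun x _ => I2 x)]
        simp

theorem plugin_risk_gamma_bound
    {Ω 𝕏 : Type*} {m' mΩ : MeasurableSpace Ω}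
    [Fintype 𝕏] [DecidableEq 𝕏] [MeasurableSpace 𝕏] [DiscreteMeasurableSpace 𝕏]
    (hm' : m' ≤ mΩ) (μ : Measure Ω) [IsProbabilityMeasure μ]
    (n : ℕ) (hn : 1 ≤ n)
    (X : Fin n → Ω → 𝕏) (hX : ∀ i, Measurable (X i))
    (ψ : Fin n → 𝕏 → Ω → ℝ)
    (hψmeas : ∀ i x, Measurable[m'] (ψ i x))
    (hψ0 : ∀ i x ω, 0 ≤ ψ i x ω) (hψ1 : ∀ i ω, ∑ x, ψ i x ω = 1)
    (hhat : Fin n → Ω → 𝕏)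
    (hhatmeas : ∀ i, Measurable[m'] (hhat i))
    (hhatmax : ∀ i, ∀ᵐ ω ∂μ, ∀ x : 𝕏, ψ i x ω ≤ ψ i (hhat i ω) ω)
    (γ : ℝ) (hγ0 : 0 < γ) (hγ : γ < 1 / 2) :
    (∫ ω, (1 / n : ℝ) * ∑ i, (if X i ω ≠ hhat i ω then (1 : ℝ) else 0) ∂μ)
      ≤ (⨅ h : {h : Fin n → Ω → 𝕏 // ∀ i, Measurable[m'] (h i)},
            ∫ ω, (1 / n : ℝ) * ∑ i, (if X i ω ≠ h.1 i ω then (1 : ℝ) else 0) ∂μ)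
          / (1 / 2 - γ)
        + (1 / n : ℝ) * ∑ i,
            (μ {ω | γ < (1 / 2 : ℝ) *
              ∑ x, |(μ⟦X i ⁻¹' {x} | m'⟧) ω - ψ i x ω|}).toReal := by
  haveI hΩ : Nonempty Ω := by
    by_contra h
    rw [not_nonempty_iff] at h
    have h1 : μ Set.univ = 1 := measure_univ
    rw [Set.univ_eq_empty_iff.mpr h, measure_empty] at h1
    exact zero_ne_one h1
  haveI hne𝕏 : Nonempty 𝕏 := ⟨X ⟨0, hn⟩ (Classical.arbitrary Ω)⟩
  haveI : Nonempty {h : Fin n → Ω → 𝕏 // ∀ i, Measurable[m'] (h i)} :=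
    ⟨⟨fun _ _ => Classical.arbitrary 𝕏, fun _ => measurable_const⟩⟩
  have hc : (0:ℝ) < 1/2 - γ := by linarith
  -- notation
  set φ : Fin n → 𝕏 → Ω → ℝ := fun i x => μ⟦X i ⁻¹' {x} | m'⟧ with hφdef
  set A : Fin n → Set Ω :=
    fun i => {ω | γ < (1 / 2 : ℝ) * ∑ x, |φ i x ω - ψ i x ω|} with hAdef
  have hφmeas : ∀ i x, Measurable (φ i x) := fun i x =>
    (stronglyMeasurable_condExp.mono hm').measurable
  have hAmeas : ∀ i, MeasurableSet (A i) := by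
    intro i
    apply measurableSet_lt measurable_const
    exact (Finset.measurable_sum _
      (fun x _ => ((hφmeas i x).sub ((hψmeas i x).mono hm' le_rfl)).abs)).const_mul _
  -- a.e. facts about posteriors
  have hφ0ae : ∀ i, ∀ᵐ ω ∂μ, ∀ x, 0 ≤ φ i x ω := by
    intro i
    rw [ae_all_iff]
    intro x
    exact condExp_nonneg (Filter.Eventually.of_forall
      (fun ω => Set.indicator_nonneg (fun _ _ => zero_le_one) ω))
  have hφsum : ∀ i, ∀ᵐ ω ∂μ, ∑ x, φ i x ω = 1 := by
    intro i
    have h3 : (∑ x, (X i ⁻¹' {x}).indicator (fun _ => (1:ℝ))) = fun _ => (1:ℝ) := by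
      funext ω
      rw [Finset.sum_apply, Finset.sum_eq_single (X i ω)]
      · exact Set.indicator_of_mem (show ω ∈ X i ⁻¹' {X i ω} from rfl) (fun _ => (1:ℝ))
      · intro x _ hx
        exact Set.indicator_of_notMem
          (show ω ∉ X i ⁻¹' {x} by simp [Ne.symm hx]) (fun _ => (1:ℝ))
      · simp
    have h2 := condExp_finsetSum (m := m') (μ := μ) (s := Finset.univ)
        (f := fun x => (X i ⁻¹' {x}).indicator (fun _ => (1:ℝ)))
        (fun x _ => (integrable_const 1).indicator (hX i (measurableSet_singleton x)))
    rw [h3, condExp_const hm' (1:ℝ)] at h2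
    filter_upwards [h2] with ω hω
    simpa [Finset.sum_apply] using hω.symm
  -- integrability
  have Iind : ∀ (i : Fin n) (g : Ω → 𝕏), Measurable[m'] g →
      Integrable (fun ω => if X i ω ≠ g ω then (1:ℝ) else 0) μ := by
    intro i g hg
    have hS : MeasurableSet {ω | X i ω = g ω} :=
      measurableSet_eq_fun (hX i) (hg.mono hm' le_rfl)
    have he : (fun ω => if X i ω ≠ g ω then (1:ℝ) else 0)
        = ({ω | X i ω = g ω}ᶜ).indicator (fun _ => 1) := by
      funext ω; by_cases h : X i ω = g ω <;> simp [Set.indicator_apply, h]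
    rw [he]; exact (integrable_const 1).indicator hS.compl
  have Iφg : ∀ (i : Fin n) (g : Ω → 𝕏), Measurable[m'] g →
      Integrable (fun ω => 1 - ∑ x, (if g ω = x then (1:ℝ) else 0) * φ i x ω) μ := by
    intro i g hg
    apply (integrable_const (1:ℝ)).sub
    apply integrable_finset_sum
    intro x _
    have he : (fun ω => (if g ω = x then (1:ℝ) else 0) * φ i x ω)
        = (g ⁻¹' {x}).indicator (φ i x) := funext (plugin_ite_mul_eq_indicator g x (φ i x))
    rw [he, hφdef]
    exact integrable_condExp.indicator (hm' _ (hg (measurableSet_singleton x)))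
  -- core per-index inequality
  have core : ∀ (i : Fin n) (g : Ω → 𝕏), Measurable[m'] g →
      ∫ ω, (if X i ω ≠ hhat i ω then (1:ℝ) else 0) ∂μ
        ≤ (∫ ω, (if X i ω ≠ g ω then (1:ℝ) else 0) ∂μ) / (1/2 - γ) + (μ (A i)).toReal := by
    intro i g hg
    rw [plugin_risk_eq hm' μ (X i) (hX i) (hhat i) (hhatmeas i),
        plugin_risk_eq hm' μ (X i) (hX i) g hg]
    have hsel : ∀ (a : 𝕏) (ω : Ω),
        ∑ x, (if a = x then (1:ℝ) else 0) * φ i x ω = φ i a ω := by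
      intro a ω
      rw [Finset.sum_eq_single a]
      · simp
      · intro x _ hx; simp [Ne.symm hx]
      · simp
    have hb : (fun ω => 1 - ∑ x, (if hhat i ω = x then (1:ℝ) else 0) * φ i x ω)
        ≤ᵐ[μ] fun ω => (A i).indicator (fun _ => (1:ℝ)) ω
            + (1 - ∑ x, (if g ω = x then (1:ℝ) else 0) * φ i x ω) / (1/2 - γ) := by
      filter_upwards [hφ0ae i, hφsum i, hhatmax i] with ω h0 hsm hmax
      rw [hsel (hhat i ω) ω, hsel (g ω) ω]
      have hgle : φ i (g ω) ω ≤ 1 := by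
        have h := Finset.single_le_sum (f := fun x => φ i x ω) (fun y _ => h0 y)
          (Finset.mem_univ (g ω))
        rw [hsm] at h; exact h
      by_cases hω : ω ∈ A i
      · rw [Set.indicator_of_mem hω]
        have hd : 0 ≤ (1 - φ i (g ω) ω) / (1/2 - γ) := div_nonneg (by linarith) hc.le
        linarith [h0 (hhat i ω)]
      · rw [Set.indicator_of_notMem hω, zero_add]
        have hT : (1 / 2 : ℝ) * ∑ x, |φ i x ω - ψ i x ω| ≤ γ := not_lt.mp hω
        exact plugin_pointwise_bound (fun x => φ i x ω) (fun x => ψ i x ω)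
          (hhat i ω) (g ω) γ hγ0 hγ h0 hsm hmax hT
    have hIA : Integrable ((A i).indicator (fun _ => (1:ℝ))) μ :=
      (integrable_const 1).indicator (hAmeas i)
    calc ∫ ω, (1 - ∑ x, (if hhat i ω = x then (1:ℝ) else 0) * φ i x ω) ∂μ
        ≤ ∫ ω, ((A i).indicator (fun _ => (1:ℝ)) ω
            + (1 - ∑ x, (if g ω = x then (1:ℝ) else 0) * φ i x ω) / (1/2 - γ)) ∂μ :=
          integral_mono_ae (Iφg i (hhat i) (hhatmeas i))
            (hIA.add ((Iφg i g hg).div_const _)) hb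
      _ = (∫ ω, (1 - ∑ x, (if g ω = x then (1:ℝ) else 0) * φ i x ω) ∂μ) / (1/2 - γ)
            + (μ (A i)).toReal := by
          rw [integral_add hIA ((Iφg i g hg).div_const _), integral_div,
            integral_indicator (hAmeas i)]
          simp [add_comm]
          rfl
  -- rewriting total risk
  have Rform : ∀ g : Fin n → Ω → 𝕏, (∀ i, Measurable[m'] (g i)) →
      (∫ ω, (1 / n : ℝ) * ∑ i, (if X i ω ≠ g i ω then (1 : ℝ) else 0) ∂μ)
        = (1 / n : ℝ) * ∑ i, ∫ ω, (if X i ω ≠ g i ω then (1 : ℝ) else 0) ∂μ := by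
    intro g hg
    rw [integral_const_mul, integral_finset_sum _ (fun i _ => Iind i (g i) (hg i))]
  have hkey : ∀ h : {h : Fin n → Ω → 𝕏 // ∀ i, Measurable[m'] (h i)},
      (∫ ω, (1 / n : ℝ) * ∑ i, (if X i ω ≠ hhat i ω then (1 : ℝ) else 0) ∂μ)
        ≤ (∫ ω, (1 / n : ℝ) * ∑ i, (if X i ω ≠ h.1 i ω then (1 : ℝ) else 0) ∂μ) / (1/2 - γ)
          + (1 / n : ℝ) * ∑ i, (μ (A i)).toReal := by
    intro h
    rw [Rform hhat hhatmeas, Rform h.1 h.2]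
    have h1 : ∑ i, ∫ ω, (if X i ω ≠ hhat i ω then (1:ℝ) else 0) ∂μ
        ≤ ∑ i, ((∫ ω, (if X i ω ≠ h.1 i ω then (1:ℝ) else 0) ∂μ) / (1/2 - γ)
            + (μ (A i)).toReal) :=
      Finset.sum_le_sum (fun i _ => core i (h.1 i) (h.2 i))
    rw [Finset.sum_add_distrib, ← Finset.sum_div] at h1
    have hn0 : (0:ℝ) ≤ 1 / n := by positivity
    calc (1/(n:ℝ)) * ∑ i, ∫ ω, (if X i ω ≠ hhat i ω then (1:ℝ) else 0) ∂μ
        ≤ (1/(n:ℝ)) * ((∑ i, ∫ ω, (if X i ω ≠ h.1 i ω then (1:ℝ) else 0) ∂μ) / (1/2 - γ)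
            + ∑ i, (μ (A i)).toReal) := mul_le_mul_of_nonneg_left h1 hn0
      _ = ((1/(n:ℝ)) * ∑ i, ∫ ω, (if X i ω ≠ h.1 i ω then (1:ℝ) else 0) ∂μ) / (1/2 - γ)
            + (1/(n:ℝ)) * ∑ i, (μ (A i)).toReal := by ring
  -- conclude via the infimum
  have h2 : ∀ h : {h : Fin n → Ω → 𝕏 // ∀ i, Measurable[m'] (h i)},
      ((∫ ω, (1 / n : ℝ) * ∑ i, (if X i ω ≠ hhat i ω then (1 : ℝ) else 0) ∂μ)
          - (1 / n : ℝ) * ∑ i, (μ (A i)).toReal) * (1/2 - γ)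
        ≤ ∫ ω, (1 / n : ℝ) * ∑ i, (if X i ω ≠ h.1 i ω then (1 : ℝ) else 0) ∂μ := by
    intro h
    rw [← le_div_iff₀ hc]
    linarith [hkey h]
  have h3 := le_ciInf h2
  rw [← le_div_iff₀ hc] at h3
  linarith [h3]
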